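/- arXiv:2211.16168 — 2 statements merged into one kernel-verified Lean document; each statement's English description precedes it below -/
import Mathlib

section
/- Let λ, μ, kp, ks, k̃p, k̃s be complex numbers and define A2 = (1/4)·[[2μ(k̃p^2 + ks^2 + k̃s^2) - 3kp^2(λ+2μ), (3kp^2(λ+2μ) + 2μ(k̃p^2 - ks^2 + k̃s^2))·i],[μ(2kp^2 - 2k̃p^2 - 3ks^2 - 2k̃s^2)·i, μ(2kp^2 + 2k̃p^2 - 3ks^2 + 2k̃s^2)]]. Then A2·(i,1)^T = μ(k̃p^2 + k̃s^2)·(i,1)^T and consequently det A2 = -(1/4)·μ·(k̃p^2 + k̃s^2)·(kp^2(3λ+4μ) + ks^2 μ). -/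
open Matrix Complex

/-- The principal symbol `A₂` of the regularized Neumann operator satisfies
`A₂ (i,1)ᵀ = μ(k̃p²+k̃s²) (i,1)ᵀ` and
`det A₂ = -(1/4) μ (k̃p²+k̃s²)(kp²(3λ+4μ) + ks² μ)`. -/
theorem stmt_11 (lam mu kp ks kp' ks' : ℂ) :
    let A2 : Matrix (Fin 2) (Fin 2) ℂ :=
      (1 / 4 : ℂ) •
        !![2 * mu * (kp' ^ 2 + ks ^ 2 + ks' ^ 2) - 3 * kp ^ 2 * (lam + 2 * mu),
           (3 * kp ^ 2 * (lam + 2 * mu) + 2 * mu * (kp' ^ 2 - ks ^ 2 + ks' ^ 2)) * I;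
           mu * (2 * kp ^ 2 - 2 * kp' ^ 2 - 3 * ks ^ 2 - 2 * ks' ^ 2) * I,
           mu * (2 * kp ^ 2 + 2 * kp' ^ 2 - 3 * ks ^ 2 + 2 * ks' ^ 2)]
    A2.mulVec ![I, 1] = (mu * (kp' ^ 2 + ks' ^ 2)) • ![I, 1] ∧
    A2.det = -(1 / 4) * mu * (kp' ^ 2 + ks' ^ 2) *
      (kp ^ 2 * (3 * lam + 4 * mu) + ks ^ 2 * mu) := by
  refine ⟨?_, ?_⟩
  · funext j
    fin_cases j <;>
      simp [Matrix.mulVec, dotProduct, Fin.sum_univ_two] <;>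
      ring_nf <;> simp [Complex.I_sq] <;> ring
  · simp [Matrix.det_fin_two, Matrix.det_smul]
    ring_nf
    simp [Complex.I_sq]
    ring
end

section
/- Let μ, λ, kp, ks, k̃p, k̃s be complex numbers with μ(k̃p^2 - 2ks^2 + k̃s^2) ≠ 0, and define A = (1/(4μ(k̃p^2 - 2ks^2 + k̃s^2)))·[[2μ(-3k̃p^2 + 3ks^2 + k̃s^2) - 3kp^2(λ+2μ), (3kp^2(λ+2μ) + 2μ(k̃p^2 + ks^2 - 3k̃s^2))·i],[μ(2kp^2 + 6k̃p^2 - 7ks^2 - 2k̃s^2)·i, μ(2kp^2 + 2k̃p^2 + ks^2 - 6k̃s^2)]]. Then A·(i,1)^T = -(i,1)^T and det A = -(1 + Tr A) = (kp^2(3λ+4μ) + ks^2 μ)/(4μ(k̃p^2 - 2ks^2 + k̃s^2)). -/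
open Matrix Complex

/-- The principal symbol `A` of the regularized Neumann operator `B^comb ∘ R_N`
satisfies `A (i,1)ᵀ = -(i,1)ᵀ` and
`det A = -(1 + Tr A) = (kp²(3λ+4μ) + ks² μ)/(4μ(k̃p² - 2ks² + k̃s²))`. -/
theorem stmt_12 (lam mu kp ks kp' ks' : ℂ)
    (hd : mu * (kp' ^ 2 - 2 * ks ^ 2 + ks' ^ 2) ≠ 0) :
    let A : Matrix (Fin 2) (Fin 2) ℂ :=
      (1 / (4 * mu * (kp' ^ 2 - 2 * ks ^ 2 + ks' ^ 2))) •
        !![2 * mu * (-3 * kp' ^ 2 + 3 * ks ^ 2 + ks' ^ 2) - 3 * kp ^ 2 * (lam + 2 * mu),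
           (3 * kp ^ 2 * (lam + 2 * mu) + 2 * mu * (kp' ^ 2 + ks ^ 2 - 3 * ks' ^ 2)) * I;
           mu * (2 * kp ^ 2 + 6 * kp' ^ 2 - 7 * ks ^ 2 - 2 * ks' ^ 2) * I,
           mu * (2 * kp ^ 2 + 2 * kp' ^ 2 + ks ^ 2 - 6 * ks' ^ 2)]
    A.mulVec ![I, 1] = -![I, 1] ∧
    A.det = -(1 + A.trace) ∧
    A.det = (kp ^ 2 * (3 * lam + 4 * mu) + ks ^ 2 * mu) /
      (4 * mu * (kp' ^ 2 - 2 * ks ^ 2 + ks' ^ 2)) := by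
  intro A
  have hI : I ^ 2 = -1 := I_sq
  have h4 : (4 : ℂ) * mu * (kp' ^ 2 - 2 * ks ^ 2 + ks' ^ 2) ≠ 0 := by
    rw [mul_assoc]
    exact mul_ne_zero (by norm_num) hd
  refine ⟨?_, ?_, ?_⟩
  · funext j
    fin_cases j <;>
      simp only [A, mulVec, Matrix.smul_apply, Matrix.cons_val', Matrix.cons_val_zero,
        Matrix.cons_val_one, Matrix.head_cons, Matrix.head_fin_const, dotProduct,
        Fin.sum_univ_two, smul_eq_mul, Pi.neg_apply, Matrix.cons_val_fin_one,
        Matrix.of_apply, Matrix.empty_val', Fin.zero_eta, Fin.mk_one] <;>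
      field_simp [left_ne_zero_of_mul hd, right_ne_zero_of_mul hd] <;>
      first
      | ring1
      | linear_combination (2 * kp ^ 2 + 6 * kp' ^ 2 - 7 * ks ^ 2 - 2 * ks' ^ 2) * hI
  · simp only [A, Matrix.det_smul, Fintype.card_fin, Matrix.det_fin_two_of, Matrix.trace_smul,
      Matrix.trace_fin_two_of, smul_eq_mul]
    field_simp [left_ne_zero_of_mul hd, right_ne_zero_of_mul hd]
    ring_nf
    rw [hI]
    ring
  · simp only [A, Matrix.det_smul, Fintype.card_fin, Matrix.det_fin_two_of, smul_eq_mul]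
    field_simp [left_ne_zero_of_mul hd, right_ne_zero_of_mul hd]
    ring_nf
    rw [hI]
    ring
end
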